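/- Let λ be an infinite set, let k ≥ 2, and let Y ⊆ λ^k be mutually algebraic. Then Y is monadically definable if and only if Y \ Δ_k is finite. -/

import Mathlib

open FirstOrder

/-- `Y ⊆ λ^k` is mutually algebraic if there is `m` such that every `a ∈ λ` occurs as a
coordinate of at most `m` tuples of `Y`. -/
def MutuallyAlgebraic {lam : Type*} {k : ℕ} (Y : Set (Fin k → lam)) : Prop :=
  ∃ m : ℕ, ∀ a : lam,
    {x ∈ Y | ∃ i, x i = a}.Finite ∧ {x ∈ Y | ∃ i, x i = a}.ncard ≤ m

/-- `Δ_k`, the set of constant `k`-tuples. -/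
def Delta (lam : Type*) (k : ℕ) : Set (Fin k → lam) := {x | ∀ i j, x i = x j}

/-- A language is monadic if it has no function or constant symbols and all relation symbols
are unary. -/
def IsMonadicLanguage (L : Language) : Prop :=
  (∀ n, IsEmpty (L.Functions n)) ∧ ∀ n, n ≠ 1 → IsEmpty (L.Relations n)

/-- `Y ⊆ λ^k` is monadically definable if it is definable with parameters in some monadic
structure on `λ`. -/
def MonadicallyDefinable.{u, v, w} {lam : Type w} {k : ℕ} (Y : Set (Fin k → lam)) : Prop :=
  ∃ (L : FirstOrder.Language.{u, v}) (_ : IsMonadicLanguage L) (S : L.Structure lam),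
    @Set.Definable lam Set.univ L S (Fin k) Y


namespace MonadicAux

open FirstOrder Language Set

universe u v w


variable {M : Type*} {L : Language} [L.Structure M]

lemma term_inv (hF : ∀ n, IsEmpty (L.Functions (n+1))) {α : Type*} (t : L.Term α) :
    ∃ C : Set M, C.Finite ∧ ∀ g : M → M, (∀ y ∈ C, g y = y) →
      ∀ v : α → M, t.realize (g ∘ v) = g (t.realize v) := by
  induction t with
  | var i => exact ⟨∅, Set.finite_empty, fun g _ v => rfl⟩
  | @func l f ts ih =>
    cases l with
    | zero =>
      refine ⟨{Structure.funMap f finZeroElim}, Set.finite_singleton _, fun g hg v => ?_⟩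
      have h1 : ∀ w : α → M, Term.realize w (Term.func f ts) = Structure.funMap f finZeroElim := by
        intro w
        simp only [Term.realize]
        congr 1
        exact funext fun i => i.elim0
      rw [h1, h1]
      exact (hg _ (Set.mem_singleton _)).symm
    | succ n =>
      haveI := hF n
      exact isEmptyElim f

lemma formula_inv (hF : ∀ n, IsEmpty (L.Functions (n+1)))
    (hR : ∀ n, n ≠ 1 → IsEmpty (L.Relations n)) {α : Type*} {n : ℕ}
    (φ : L.BoundedFormula α n) :
    ∃ (U : Set (L.Relations 1)) (C : Set M), U.Finite ∧ C.Finite ∧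
      ∀ g : M ≃ M, (∀ y ∈ C, g y = y) →
        (∀ R ∈ U, ∀ x : M, Structure.RelMap R ![g x] ↔ Structure.RelMap R ![x]) →
        ∀ (v : α → M) (xs : Fin n → M),
          φ.Realize (⇑g ∘ v) (⇑g ∘ xs) ↔ φ.Realize v xs := by
  induction φ with
  | falsum => exact ⟨∅, ∅, Set.finite_empty, Set.finite_empty, fun _ _ _ _ _ => Iff.rfl⟩
  | equal t₁ t₂ =>
    obtain ⟨C₁, hC₁, h₁⟩ := term_inv (M := M) hF t₁
    obtain ⟨C₂, hC₂, h₂⟩ := term_inv (M := M) hF t₂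
    refine ⟨∅, C₁ ∪ C₂, Set.finite_empty, hC₁.union hC₂, fun g hg _ v xs => ?_⟩
    have e : Sum.elim (⇑g ∘ v) (⇑g ∘ xs) = ⇑g ∘ Sum.elim v xs := (Sum.comp_elim _ _ _).symm
    show t₁.realize (Sum.elim (⇑g ∘ v) (⇑g ∘ xs)) = t₂.realize (Sum.elim (⇑g ∘ v) (⇑g ∘ xs)) ↔
      t₁.realize (Sum.elim v xs) = t₂.realize (Sum.elim v xs)
    rw [e, h₁ g (fun y hy => hg y (Set.mem_union_left _ hy)),
      h₂ g (fun y hy => hg y (Set.mem_union_right _ hy))]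
    exact g.injective.eq_iff
  | @rel m l R ts =>
    match l, R, ts with
    | 0, R, ts => exact (hR 0 (by omega)).elim R
    | 1, R, ts =>
      obtain ⟨C, hC, h⟩ := term_inv (M := M) hF (ts 0)
      refine ⟨{R}, C, Set.finite_singleton _, hC, fun g hg hrel v xs => ?_⟩
      have e1 : ∀ F : Fin 1 → M, F = ![F 0] := fun F => funext fun i => by
        fin_cases i; rfl
      show Structure.RelMap R (fun i => (ts i).realize (Sum.elim (⇑g ∘ v) (⇑g ∘ xs))) ↔
        Structure.RelMap R (fun i => (ts i).realize (Sum.elim v xs))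
      rw [e1 (fun i => (ts i).realize (Sum.elim (⇑g ∘ v) (⇑g ∘ xs))),
        e1 (fun i => (ts i).realize (Sum.elim v xs))]
      have e : Sum.elim (⇑g ∘ v) (⇑g ∘ xs) = ⇑g ∘ Sum.elim v xs := (Sum.comp_elim _ _ _).symm
      rw [e, h g hg]
      exact hrel R (Set.mem_singleton _) _
    | (l + 2), R, ts => exact (hR (l+2) (by omega)).elim R
  | imp φ ψ ihφ ihψ =>
    obtain ⟨U₁, C₁, hU₁, hC₁, h₁⟩ := ihφ
    obtain ⟨U₂, C₂, hU₂, hC₂, h₂⟩ := ihψ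
    refine ⟨U₁ ∪ U₂, C₁ ∪ C₂, hU₁.union hU₂, hC₁.union hC₂, fun g hg hrel v xs => ?_⟩
    simp only [BoundedFormula.realize_imp]
    rw [h₁ g (fun y hy => hg y (Set.mem_union_left _ hy))
        (fun R hR' => hrel R (Set.mem_union_left _ hR')),
      h₂ g (fun y hy => hg y (Set.mem_union_right _ hy))
        (fun R hR' => hrel R (Set.mem_union_right _ hR'))]
  | all φ ih =>
    obtain ⟨U, C, hU, hC, h⟩ := ih
    refine ⟨U, C, hU, hC, fun g hg hrel v xs => ?_⟩
    simp only [BoundedFormula.realize_all]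
    constructor
    · intro H a
      have := H (g a)
      rw [← Fin.comp_snoc, h g hg hrel] at this
      exact this
    · intro H a
      obtain ⟨b, rfl⟩ := g.surjective a
      rw [← Fin.comp_snoc, h g hg hrel]
      exact H b

lemma forward {lam : Type*} [Infinite lam] {k : ℕ} (hk : 2 ≤ k)
    {Y : Set (Fin k → lam)} (hY : MutuallyAlgebraic Y)
    {L : Language} (hL : IsMonadicLanguage L) (S : L.Structure lam)
    (hdef : @Set.Definable lam Set.univ L S (Fin k) Y) :
    (Y \ Delta lam k).Finite := by
  letI := S
  classical
  obtain ⟨φ, hφ⟩ := hdef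
  -- the language with constants is still "monadic up to constants"
  have hF : ∀ n, IsEmpty ((L[[(Set.univ : Set lam)]]).Functions (n+1)) := fun n => by
    haveI := hL.1 (n+1)
    exact inferInstanceAs (IsEmpty (L.Functions (n+1) ⊕ PEmpty))
  have hR : ∀ n, n ≠ 1 → IsEmpty ((L[[(Set.univ : Set lam)]]).Relations n) := fun n hn => by
    haveI := hL.2 n hn
    exact inferInstanceAs (IsEmpty (L.Relations n ⊕ Empty))
  obtain ⟨U, C, hU, hC, hinv⟩ := formula_inv (M := lam) hF hR φ
  by_contra hInf
  rw [← Set.Infinite] at hInf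
  -- the set of coordinates of non-constant tuples of Y is infinite
  set W : Set lam := {a | ∃ x ∈ Y \ Delta lam k, ∃ i, x i = a} with hW
  have hWinf : W.Infinite := by
    intro hWfin
    apply hInf
    have : (Y \ Delta lam k) ⊆ Set.pi Set.univ (fun _ : Fin k => W) := by
      intro x hx i _
      exact ⟨x, hx, i, rfl⟩
    exact (Set.Finite.pi (fun _ => hWfin)).subset this
  -- colors
  haveI : Finite ↥U := hU.to_subtype
  set color : lam → (↥U → Prop) := fun a R => Structure.RelMap R.1 ![a] with hcolor
  set fiber : (↥U → Prop) → Set lam := fun p => {a | color a = p} with hfiber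
  set B : Set lam := ⋃ p : {p : ↥U → Prop // (fiber p).Finite}, fiber p.1 with hB
  have hBfin : B.Finite := Set.finite_iUnion fun p => p.2
  obtain ⟨a0, ha0⟩ := (hWinf.diff (hC.union hBfin)).nonempty
  obtain ⟨x, hxY, i0, hxi0⟩ := ha0.1
  have ha0C : a0 ∉ C := fun h => ha0.2 (Set.mem_union_left _ h)
  have ha0B : a0 ∉ B := fun h => ha0.2 (Set.mem_union_right _ h)
  -- a coordinate different from a0
  have hxj : ∃ j, x j ≠ a0 := by
    by_contra h
    push_neg at h
    exact hxY.2 fun i j => (h i).trans (h j).symm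
  obtain ⟨j0, hj0⟩ := hxj
  set b := x j0 with hb
  -- the fiber of a0 is infinite
  have hfib : (fiber (color a0)).Infinite := by
    intro hfin
    exact ha0B (Set.mem_iUnion.2 ⟨⟨color a0, hfin⟩, rfl⟩)
  set P : Set lam := fiber (color a0) \ (C ∪ Set.range x) with hP
  have hPinf : P.Infinite := hfib.diff (hC.union (Set.finite_range x))
  -- tuples obtained by swapping
  set T : lam → (Fin k → lam) := fun c => ⇑(Equiv.swap a0 c) ∘ x with hT
  have hTmem : ∀ c ∈ P, T c ∈ {z ∈ Y | ∃ i, z i = b} := by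
    intro c hc
    have hcC : c ∉ C := fun h => hc.2 (Set.mem_union_left _ h)
    have hcr : c ∉ Set.range x := fun h => hc.2 (Set.mem_union_right _ h)
    have hca0 : c ≠ a0 := fun h => hcr ⟨i0, by rw [hxi0, h]⟩
    have hcb : c ≠ b := fun h => hcr ⟨j0, h.symm⟩
    have hcol : color c = color a0 := hc.1
    set g := Equiv.swap a0 c with hg
    have hgC : ∀ y ∈ C, g y = y := fun y hy =>
      Equiv.swap_apply_of_ne_of_ne (by rintro rfl; exact ha0C hy) (by rintro rfl; exact hcC hy)
    have hgrel : ∀ R ∈ U, ∀ z : lam, Structure.RelMap R ![g z] ↔ Structure.RelMap R ![z] := by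
      intro R hRU z
      rcases eq_or_ne z a0 with rfl | h1
      · rw [hg, Equiv.swap_apply_left]
        exact iff_of_eq (congrFun hcol ⟨R, hRU⟩)
      rcases eq_or_ne z c with rfl | h2
      · rw [hg, Equiv.swap_apply_right]
        exact (iff_of_eq (congrFun hcol ⟨R, hRU⟩)).symm
      · rw [hg, Equiv.swap_apply_of_ne_of_ne h1 h2]
    have hYx : x ∈ Y := hxY.1
    rw [hφ] at hYx ⊢  -- hφ : Y = setOf φ.Realize
    constructor
    · show φ.Realize (T c)
      have hdef0 : (⇑g ∘ (default : Fin 0 → lam)) = default := funext fun i => i.elim0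
      have := hinv g hgC hgrel x default
      rw [hdef0] at this
      exact this.2 hYx
    · refine ⟨j0, ?_⟩
      show g (x j0) = b
      rw [hg, Equiv.swap_apply_of_ne_of_ne hj0 (fun h => hcr ⟨j0, h⟩)]
  -- contradiction with mutual algebraicity
  obtain ⟨m, hm⟩ := hY
  have hbig : ({z ∈ Y | ∃ i, z i = b}).Infinite := by
    apply Set.infinite_of_injOn_mapsTo (f := T) ?_ hTmem hPinf
    intro c₁ hc₁ c₂ hc₂ h
    have h₁ : T c₁ i0 = c₁ := by
      show Equiv.swap a0 c₁ (x i0) = c₁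
      rw [hxi0, Equiv.swap_apply_left]
    have h₂ : T c₂ i0 = c₂ := by
      show Equiv.swap a0 c₂ (x i0) = c₂
      rw [hxi0, Equiv.swap_apply_left]
    rw [← h₁, ← h₂, h]
  exact hbig (hm b).1



/-- relation symbols for the monadic language: one unary symbol -/
def monRel : ℕ → Type v
  | 1 => PUnit
  | _ => PEmpty

/-- The monadic language with one unary relation symbol. -/
def monLang : FirstOrder.Language.{u, v} := ⟨fun _ => PEmpty, monRel⟩

lemma monLang_monadic : IsMonadicLanguage monLang.{u,v} := by
  constructor
  · exact fun n => inferInstanceAs (IsEmpty PEmpty)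
  · intro n hn
    match n, hn with
    | 0, _ => exact inferInstanceAs (IsEmpty PEmpty)
    | (n+2), _ => exact inferInstanceAs (IsEmpty PEmpty)

/-- The monadic structure interpreting the unary relation as "the constant tuple lies in Y". -/
def monStruct {lam : Type w} {k : ℕ} (Y : Set (Fin k → lam)) : monLang.{u,v}.Structure lam where
  funMap := fun {n} f _ => f.elim
  RelMap := fun {n} r xs =>
    match n, r with
    | 1, _ => (fun _ : Fin k => xs 0) ∈ Y
    | 0, r => r.elim
    | (_+2), r => r.elim

section DefinableHelpers

variable {M : Type*} {L : Language} [L.Structure M] {α : Type*}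

lemma definable_coordEq (i j : α) :
    (Set.univ : Set M).Definable L {x : α → M | x i = x j} := by
  refine (Set.empty_definable_iff.2 ⟨Term.equal (Term.var i) (Term.var j), ?_⟩).mono
    (Set.empty_subset _)
  ext x
  simp [Formula.realize_equal, Term.realize]

lemma definable_rel1 (r : L.Relations 1) (i : α) :
    (Set.univ : Set M).Definable L {x : α → M | Structure.RelMap r ![x i]} := by
  refine (Set.empty_definable_iff.2 ⟨r.formula₁ (Term.var i), ?_⟩).mono (Set.empty_subset _)
  ext x
  simp [Formula.realize_rel₁, Term.realize]

lemma definable_single (y : α → M) [Fintype α] :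
    (Set.univ : Set M).Definable L {y} := by
  have h1 : ({y} : Set (α → M)) = ⋂ i ∈ (Finset.univ : Finset α), {x | x i = y i} := by
    ext x
    simp only [Set.mem_singleton_iff, Set.mem_iInter, Set.mem_setOf_eq, Finset.mem_univ,
      forall_true_left, true_implies]
    exact ⟨fun h => by rw [h]; tauto, fun h => funext h⟩
  rw [h1]
  refine Set.definable_biInter_finset (fun i => ?_) _
  refine ⟨Term.equal (Term.var i) ((L.con ⟨y i, Set.mem_univ _⟩).term), Set.ext fun x => ?_⟩
  rw [Set.mem_setOf_eq, Set.mem_setOf_eq, Formula.realize_equal, Term.realize_con]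
  simp [Term.realize]

lemma definable_finite {s : Set (α → M)} (hs : s.Finite) [Fintype α] :
    (Set.univ : Set M).Definable L s := by
  have h1 : s = ⋃ y ∈ hs.toFinset, ({y} : Set (α → M)) := by
    ext x
    simp
  rw [h1]
  exact Set.definable_biUnion_finset (fun y => definable_single y) _

end DefinableHelpers

lemma backward {lam : Type w} {k : ℕ} (hk : 2 ≤ k)
    {Y : Set (Fin k → lam)} (hfin : (Y \ Delta lam k).Finite) :
    MonadicallyDefinable.{u,v} Y := by
  refine ⟨monLang.{u,v}, monLang_monadic, monStruct Y, ?_⟩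
  letI := monStruct.{u,v} Y
  have i0 : Fin k := ⟨0, by omega⟩
  set r : monLang.{u,v}.Relations 1 := PUnit.unit with hr
  set D : Set (Fin k → lam) :=
    (⋂ i ∈ (Finset.univ : Finset (Fin k)), {x | x i = x i0}) ∩
      {x : Fin k → lam | Structure.RelMap r ![x i0]} with hD
  have hYeq : Y = (Y \ Delta lam k) ∪ D := by
    ext x
    constructor
    · intro hx
      by_cases hΔ : x ∈ Delta lam k
      · refine Or.inr ⟨?_, ?_⟩
        · simp only [Set.mem_iInter, Set.mem_setOf_eq, Finset.mem_univ, forall_true_left,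
            true_implies]
          intro i
          exact hΔ i i0
        · show (fun _ : Fin k => (![x i0]) 0) ∈ Y
          have : (fun _ : Fin k => (![x i0]) 0) = x := funext fun i => (hΔ i i0).symm
          rw [this]
          exact hx
      · exact Or.inl ⟨hx, hΔ⟩
    · rintro (hx | hx)
      · exact hx.1
      · have h1 : ∀ i, x i = x i0 := by
          have := hx.1
          simp only [Set.mem_iInter, Set.mem_setOf_eq, Finset.mem_univ, forall_true_left,
            true_implies] at this
          exact this
        have h2 : (fun _ : Fin k => (![x i0]) 0) ∈ Y := hx.2
        have : (fun _ : Fin k => (![x i0]) 0) = x := funext fun i => (h1 i).symm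
        rwa [this] at h2
  have h2 : (Set.univ : Set lam).Definable monLang ((Y \ Delta lam k) ∪ D) :=
    (definable_finite hfin).union
      ((Set.definable_biInter_finset (fun i => definable_coordEq i i0) _).inter
        (definable_rel1 r i0))
  rwa [← hYeq] at h2


end MonadicAux

theorem stmt0.{u, v, w} {lam : Type w} [Infinite lam] {k : ℕ} (hk : 2 ≤ k)
    {Y : Set (Fin k → lam)} (hY : MutuallyAlgebraic Y) :
    MonadicallyDefinable.{u, v} Y ↔ (Y \ Delta lam k).Finite := by
  constructor
  · rintro ⟨L, hL, S, hdef⟩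
    exact MonadicAux.forward hk hY hL S hdef
  · exact MonadicAux.backward hk
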